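/- Abstract comparison lemma: let T₁, T₂, T₃ : Ω → Ω be weakly Picard operators on an ordered metric space with closed order, with T₁ ≤ T₂ ≤ T₃ pointwise and T₂ increasing. Then x ≤ y ≤ z implies T₁^∞(x) ≤ T₂^∞(y) ≤ T₃^∞(z). -/
import Mathlib

open Filter Topology

/-- Abstract comparison lemma. -/
theorem abstract_comparison {Ω : Type*} [MetricSpace Ω] [PartialOrder Ω]
    (T₁ T₂ T₃ : Ω → Ω) (T₁inf T₂inf T₃inf : Ω → Ω)
    (hclosed : ∀ (u v : ℕ → Ω) (x y : Ω), (∀ n, u n ≤ v n) →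
      Tendsto u atTop (𝓝 x) → Tendsto v atTop (𝓝 y) → x ≤ y)
    -- each Tᵢ is a weakly Picard operator with limit operator Tᵢinf
    (hWPO₁ : ∀ x : Ω, Function.IsFixedPt T₁ (T₁inf x) ∧
      Tendsto (fun n => T₁^[n] x) atTop (𝓝 (T₁inf x)))
    (hWPO₂ : ∀ x : Ω, Function.IsFixedPt T₂ (T₂inf x) ∧
      Tendsto (fun n => T₂^[n] x) atTop (𝓝 (T₂inf x)))
    (hWPO₃ : ∀ x : Ω, Function.IsFixedPt T₃ (T₃inf x) ∧
      Tendsto (fun n => T₃^[n] x) atTop (𝓝 (T₃inf x)))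
    -- T₁ ≤ T₂ ≤ T₃ pointwise
    (h12 : ∀ x : Ω, T₁ x ≤ T₂ x)
    (h23 : ∀ x : Ω, T₂ x ≤ T₃ x)
    -- T₂ is increasing
    (hmono : ∀ x y : Ω, x ≤ y → T₂ x ≤ T₂ y) :
    ∀ x y z : Ω, x ≤ y → y ≤ z → T₁inf x ≤ T₂inf y ∧ T₂inf y ≤ T₃inf z := by
  intro x y z hxy hyz
  have h1 : ∀ n, T₁^[n] x ≤ T₂^[n] y := by
    intro n
    induction n with
    | zero => exact hxy
    | succ n ih =>
      rw [Function.iterate_succ_apply', Function.iterate_succ_apply']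
      exact le_trans (h12 _) (hmono _ _ ih)
  have h2 : ∀ n, T₂^[n] y ≤ T₃^[n] z := by
    intro n
    induction n with
    | zero => exact hyz
    | succ n ih =>
      rw [Function.iterate_succ_apply', Function.iterate_succ_apply']
      exact le_trans (hmono _ _ ih) (h23 _)
  exact ⟨hclosed _ _ _ _ h1 (hWPO₁ x).2 (hWPO₂ y).2,
    hclosed _ _ _ _ h2 (hWPO₂ y).2 (hWPO₃ z).2⟩
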